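/- Consider the module V_{0,0} (the case α = 0, b = 0), i.e., the operators L_m(f,g) = (t^m D f, t^m(D+m/2)g), H_m(f,g) = (0, t^m g), G_m⁺(f,g) = (0, −2t^m D f), G_m⁻(f,g) = (t^m g, 0) on W. Then: (i) the pair (ℂ·1, {0}) is invariant for V_{0,0}, and every operator L_m, H_m, G_m⁺, G_m⁻ vanishes on ℂ·1 × {0}; (ii) every invariant pair (S₀,S₁) with ℂ·1 ⊆ S₀ and (S₀,S₁) ≠ (ℂ·1, {0}) satisfies S₀ = P and S₁ = P. In particular, the quotient V_t = (ℂ[t,t⁻¹] ⊕ ξℂ[t,t⁻¹]) / (ℂ ⊕ ξ0) is an irreducible module over the N=2 Ramond algebra. -/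

import Mathlib

/- STATEMENT 10: For V_{0,0} (α = 0, b = 0), i.e. L_m(f,g) = (t^m D f, t^m(D+m/2)g),
H_m(f,g) = (0, t^m g), G_m⁺(f,g) = (0, −2t^m D f), G_m⁻(f,g) = (t^m g, 0):
(i) the pair (ℂ·1, {0}) is invariant and all operators vanish on ℂ·1 × {0};
(ii) every invariant pair (S₀,S₁) with ℂ·1 ⊆ S₀ and (S₀,S₁) ≠ (ℂ·1, {0}) satisfies
S₀ = P and S₁ = P. In particular the quotient V_t = (ℂ[t,t⁻¹] ⊕ ξℂ[t,t⁻¹])/(ℂ ⊕ ξ0)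
is an irreducible N=2 Ramond module. -/

open LaurentPolynomial

noncomputable section

abbrev Lp := LaurentPolynomial ℂ

lemma smul_T_eq (n : ℤ) (c : ℂ) : c • (T n : Lp) = AddMonoidAlgebra.single n c := by
  rw [show (T n : Lp) = AddMonoidAlgebra.single n 1 from rfl, AddMonoidAlgebra.smul_single', mul_one]

lemma D_apply (D : Lp →ₗ[ℂ] Lp) (hD : ∀ n : ℤ, D (T n) = (n : ℂ) • T n)
    (f : Lp) (k : ℤ) : (D f).coeff k = (k : ℂ) * f.coeff k := by
  induction f using AddMonoidAlgebra.induction_linear with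
  | zero => simp
  | add f g hf hg => rw [map_add, AddMonoidAlgebra.coeff_add, Finsupp.add_apply, hf, hg, AddMonoidAlgebra.coeff_add, Finsupp.add_apply, mul_add]
  | single a b =>
    have h1 : (AddMonoidAlgebra.single a b : Lp) = b • T a := (smul_T_eq a b).symm
    rw [h1, map_smul, hD, smul_smul, smul_T_eq, ← h1]
    rw [AddMonoidAlgebra.coeff_single, AddMonoidAlgebra.coeff_single, Finsupp.single_apply, Finsupp.single_apply]
    by_cases h : a = k
    · rw [if_pos h, if_pos h]
      subst h
      ring
    · rw [if_neg h, if_neg h, mul_zero]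

lemma ker_D (D : Lp →ₗ[ℂ] Lp) (hD : ∀ n : ℤ, D (T n) = (n : ℂ) • T n)
    (f : Lp) (h : D f = 0) : f ∈ Submodule.span ℂ {(1 : Lp)} := by
  rw [Submodule.mem_span_singleton]
  refine ⟨f.coeff 0, ?_⟩
  rw [show (1 : Lp) = T 0 from T_zero.symm, smul_T_eq]
  ext k
  rw [AddMonoidAlgebra.coeff_single, Finsupp.single_apply]
  by_cases hk : (0 : ℤ) = k
  · simp [← hk]
  · have := D_apply D hD f k
    rw [h] at this
    simp only [AddMonoidAlgebra.coeff_zero, Finsupp.coe_zero, Pi.zero_apply] at this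
    have hk' : (k : ℂ) ≠ 0 := by exact_mod_cast fun hh => hk (by exact_mod_cast hh.symm)
    have : f.coeff k = 0 := by
      rcases mul_eq_zero.mp this.symm with h' | h'
      · exact absurd h' hk'
      · exact h'
    simp [hk, this]

lemma top_of_T (S : Submodule ℂ Lp) (h : ∀ n : ℤ, (T n : Lp) ∈ S) : S = ⊤ := by
  rw [eq_top_iff]
  intro f _
  rw [← AddMonoidAlgebra.sum_coeff_single f]
  refine Submodule.sum_mem S fun n _ => ?_
  rw [← smul_T_eq]
  exact S.smul_mem _ (h n)

lemma exists_T_mem (D : Lp →ₗ[ℂ] Lp) (hD : ∀ n : ℤ, D (T n) = (n : ℂ) • T n)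
    (S : Submodule ℂ Lp) (hDcl : ∀ g ∈ S, D g ∈ S) :
    ∀ N : ℕ, ∀ g ∈ S, g ≠ 0 → g.coeff.support.card ≤ N → ∃ n : ℤ, (T n : Lp) ∈ S := by
  intro N
  induction N with
  | zero =>
    intro g _ hg0 hc
    exact absurd (AddMonoidAlgebra.coeff_eq_zero.mp (Finsupp.support_eq_empty.mp (Finset.card_eq_zero.mp (Nat.le_zero.mp hc)))) hg0
  | succ N ih =>
    intro g hgS hg0 hc
    obtain ⟨n₀, hn₀⟩ := Finsupp.support_nonempty_iff.mpr (mt AddMonoidAlgebra.coeff_eq_zero.mp hg0)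
    have hgn₀ : g.coeff n₀ ≠ 0 := Finsupp.mem_support_iff.mp hn₀
    by_cases hmono : ∀ k : ℤ, k ≠ n₀ → g.coeff k = 0
    · refine ⟨n₀, ?_⟩
      have hg : (T n₀ : Lp) = (g.coeff n₀)⁻¹ • g := by
        ext k
        rw [show (T n₀ : Lp) = AddMonoidAlgebra.single n₀ 1 from rfl, AddMonoidAlgebra.coeff_single, Finsupp.single_apply,
          AddMonoidAlgebra.coeff_smul_apply]
        by_cases hk : k = n₀
        · simp [hk, inv_mul_cancel₀ hgn₀]
        · simp [Ne.symm hk, hmono k hk]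
      rw [hg]
      exact S.smul_mem _ hgS
    · push_neg at hmono
      obtain ⟨k, hkne, hgk⟩ := hmono
      set h : Lp := D g - (n₀ : ℂ) • g with hh
      have hhS : h ∈ S := S.sub_mem (hDcl g hgS) (S.smul_mem _ hgS)
      have happ : ∀ j : ℤ, h.coeff j = ((j : ℂ) - n₀) * g.coeff j := by
        intro j
        rw [hh, AddMonoidAlgebra.coeff_sub, Finsupp.sub_apply, AddMonoidAlgebra.coeff_smul_apply, D_apply D hD, smul_eq_mul, sub_mul]
      have hne : h ≠ 0 := by
        intro h0
        have := happ k
        rw [h0] at this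
        simp only [AddMonoidAlgebra.coeff_zero, Finsupp.coe_zero, Pi.zero_apply] at this
        rcases mul_eq_zero.mp this.symm with h' | h'
        · exact hkne (by exact_mod_cast sub_eq_zero.mp h')
        · exact hgk h'
      have hsub : h.coeff.support ⊆ g.coeff.support.erase n₀ := by
        intro j hj
        have hj' : h.coeff j ≠ 0 := Finsupp.mem_support_iff.mp hj
        rw [happ j] at hj'
        rcases mul_ne_zero_iff.mp hj' with ⟨h1, h2⟩
        refine Finset.mem_erase.mpr ⟨?_, Finsupp.mem_support_iff.mpr h2⟩
        intro hjn
        exact h1 (by rw [hjn]; ring)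
      have hcard : h.coeff.support.card ≤ N := by
        calc h.coeff.support.card ≤ (g.coeff.support.erase n₀).card := Finset.card_le_card hsub
          _ = g.coeff.support.card - 1 := Finset.card_erase_of_mem hn₀
          _ ≤ N := by omega
      exact ih h hhS hne hcard

/-- `L_m(f,g) = (t^m(α+D+mb)f, t^m(α+D+m(b+1/2))g)` -/
def Lop (D : Lp →ₗ[ℂ] Lp) (α : Lp) (b : ℂ) (m : ℤ) : Lp × Lp → Lp × Lp :=
  fun w => (T m * (α * w.1 + D w.1 + ((m : ℂ) * b) • w.1),
            T m * (α * w.2 + D w.2 + ((m : ℂ) * (b + 1 / 2)) • w.2))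

/-- `H_m(f,g) = (−2b·t^m f, (1−2b)·t^m g)` -/
def Hop (b : ℂ) (m : ℤ) : Lp × Lp → Lp × Lp :=
  fun w => ((-2 * b) • (T m * w.1), (1 - 2 * b) • (T m * w.2))

/-- `G_m⁺(f,g) = (0, −2t^m(α+D+2mb)f)` -/
def Gp (D : Lp →ₗ[ℂ] Lp) (α : Lp) (b : ℂ) (m : ℤ) : Lp × Lp → Lp × Lp :=
  fun w => (0, (-2 : ℂ) • (T m * (α * w.1 + D w.1 + (2 * (m : ℂ) * b) • w.1)))

/-- `G_m⁻(f,g) = (t^m g, 0)` -/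
def Gm (m : ℤ) : Lp × Lp → Lp × Lp :=
  fun w => (T m * w.2, 0)

/-- `(S₀, S₁)` is an invariant pair for `V_{α,b}`. -/
def TInv (D : Lp →ₗ[ℂ] Lp) (α : Lp) (b : ℂ) (S₀ S₁ : Submodule ℂ Lp) : Prop :=
  ∀ m : ℤ, ∀ f ∈ S₀, ∀ g ∈ S₁,
    (Lop D α b m (f, g)).1 ∈ S₀ ∧ (Lop D α b m (f, g)).2 ∈ S₁ ∧
    (Hop b m (f, g)).1 ∈ S₀ ∧ (Hop b m (f, g)).2 ∈ S₁ ∧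
    (Gp D α b m (f, g)).1 ∈ S₀ ∧ (Gp D α b m (f, g)).2 ∈ S₁ ∧
    (Gm m (f, g)).1 ∈ S₀ ∧ (Gm m (f, g)).2 ∈ S₁

theorem stmt10 (D : Lp →ₗ[ℂ] Lp)
    (hD : ∀ n : ℤ, D (T n) = (n : ℂ) • T n) :
    (TInv D 0 0 (Submodule.span ℂ {(1 : Lp)}) ⊥ ∧
      (∀ m : ℤ, ∀ f ∈ Submodule.span ℂ {(1 : Lp)},
        Lop D 0 0 m (f, 0) = 0 ∧ Hop 0 m (f, 0) = 0 ∧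
        Gp D 0 0 m (f, 0) = 0 ∧ Gm m (f, 0) = 0)) ∧
    (∀ S₀ S₁ : Submodule ℂ Lp, TInv D 0 0 S₀ S₁ →
      Submodule.span ℂ {(1 : Lp)} ≤ S₀ →
      ¬(S₀ = Submodule.span ℂ {(1 : Lp)} ∧ S₁ = ⊥) →
      S₀ = ⊤ ∧ S₁ = ⊤) := by
  constructor
  · constructor
    · intro m f hf g hg
      rw [Submodule.mem_bot] at hg
      subst hg
      obtain ⟨c, rfl⟩ := Submodule.mem_span_singleton.mp hf
      have hDf : D (c • (1 : Lp)) = 0 := by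
        rw [map_smul, show (1 : Lp) = T 0 from T_zero.symm, hD]
        simp
      refine ⟨?_, ?_, ?_, ?_, ?_, ?_, ?_, ?_⟩ <;>
        simp [Lop, Hop, Gp, Gm, hDf]
    · intro m f hf
      obtain ⟨c, rfl⟩ := Submodule.mem_span_singleton.mp hf
      have hDf : D (c • (1 : Lp)) = 0 := by
        rw [map_smul, show (1 : Lp) = T 0 from T_zero.symm, hD]
        simp
      refine ⟨?_, ?_, ?_, ?_⟩ <;>
        simp [Lop, Hop, Gp, Gm, hDf, Prod.ext_iff]
  · intro S₀ S₁ hInv hle hne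
    have h1 : (1 : Lp) ∈ S₀ := hle (Submodule.mem_span_singleton_self 1)
    have hGpD : ∀ f ∈ S₀, D f ∈ S₁ := by
      intro f hf
      have h2 := (hInv 0 f hf 0 S₁.zero_mem).2.2.2.2.2.1
      have h2' : (-2 : ℂ) • D f ∈ S₁ := by simpa [Gp, T_zero] using h2
      have h3 := S₁.smul_mem ((-2 : ℂ)⁻¹) h2'
      rwa [smul_smul, inv_mul_cancel₀ (by norm_num : (-2 : ℂ) ≠ 0), one_smul] at h3
    have hDS₁ : ∀ g ∈ S₁, D g ∈ S₁ := by
      intro g hg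
      have h2 := (hInv 0 1 h1 g hg).2.1
      simpa [Lop, T_zero] using h2
    have hTS₁ : ∀ (m : ℤ), ∀ g ∈ S₁, T m * g ∈ S₁ := by
      intro m g hg
      have h2 := (hInv m 1 h1 g hg).2.2.2.1
      simpa [Hop] using h2
    have hTS₀ : ∀ (m : ℤ), ∀ g ∈ S₁, T m * g ∈ S₀ := by
      intro m g hg
      have h2 := (hInv m 1 h1 g hg).2.2.2.2.2.2.1
      simpa [Gm] using h2
    by_cases hb : S₁ = ⊥
    · exfalso
      apply hne
      refine ⟨le_antisymm ?_ hle, hb⟩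
      intro f hf
      have h2 := hGpD f hf
      rw [hb, Submodule.mem_bot] at h2
      exact ker_D D hD f h2
    · obtain ⟨g, hgS, hg0⟩ := Submodule.ne_bot_iff S₁ |>.mp hb
      obtain ⟨k, hk⟩ := exists_T_mem D hD S₁ hDS₁ g.coeff.support.card g hgS hg0 le_rfl
      have hallS₁ : ∀ m : ℤ, (T m : Lp) ∈ S₁ := by
        intro m
        have h2 := hTS₁ (m - k) _ hk
        rwa [← T_add, sub_add_cancel] at h2
      have hS₁top : S₁ = ⊤ := top_of_T S₁ hallS₁
      have hallS₀ : ∀ m : ℤ, (T m : Lp) ∈ S₀ := by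
        intro m
        have h2 := hTS₀ m 1 (by rw [hS₁top]; trivial)
        rwa [mul_one] at h2
      exact ⟨top_of_T S₀ hallS₀, hS₁top⟩


end
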